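/- For every integer s ≥ 2, ζ(s) = 2^s/(2^s - 1) · β(s) + (-1)^s · 2/(2^s(2^s - 1)) · ψ^(s-1)(3/4) / Γ(s). -/

import Mathlib

open Real

/-- The `k`-th polygamma function: the `(k+1)`-st derivative of `log ∘ Γ`. -/
noncomputable def polygamma (k : ℕ) (x : ℝ) : ℝ :=
  iteratedDeriv (k + 1) (fun y => Real.log (Real.Gamma y)) x

/-- The Dirichlet beta function `β(s) = ∑_{k≥1} (-1)^(k-1)/(2k-1)^s`. -/
noncomputable def dirichletBeta (s : ℕ) : ℝ :=
  ∑' k : ℕ, (-1 : ℝ) ^ k / (2 * (k : ℝ) + 1) ^ s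

/-- The Riemann zeta function for integer arguments `s ≥ 2`, as `∑_{n≥1} 1/n^s`. -/
noncomputable def zetaInt (s : ℕ) : ℝ :=
  ∑' n : ℕ, 1 / ((n : ℝ) + 1) ^ s

namespace PolygammaAux

open Real Filter Set Finset Topology

noncomputable section


def pgSet : Set ℝ := Set.Ioo (1/2 : ℝ) 1
lemma pgSet_open : IsOpen pgSet := isOpen_Ioo
lemma pgSet_preconn : IsPreconnected pgSet := (convex_Ioo _ _).isPreconnected
lemma mem_pgSet : (3/4 : ℝ) ∈ pgSet := by constructor <;> norm_num
lemma pg_summable_sq : Summable (fun m : ℕ => 1/((m:ℝ)+1)^2) := by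
  have h := Real.summable_one_div_nat_pow.mpr (le_refl 2)
  have h2 := (summable_nat_add_iff 1).mpr h
  refine h2.congr fun n => ?_
  push_cast
  ring_nf
def pgS (k : ℕ) (x : ℝ) : ℝ := ∑' m : ℕ, 1/(x+(m:ℝ))^k
def Psi (x : ℝ) : ℝ :=
  -eulerMascheroniConstant - 1/x + ∑' m : ℕ, (1/((m:ℝ)+1) - 1/(x+(m:ℝ)+1))
lemma pg_pos {x : ℝ} (hx : x ∈ pgSet) (m : ℕ) : (0:ℝ) < x + m := by
  have h0 : (0:ℝ) ≤ m := Nat.cast_nonneg m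
  have := hx.1
  nlinarith
lemma pg_pow_bound {x : ℝ} (hx : x ∈ pgSet) (m k : ℕ) (hk : 2 ≤ k) :
    ‖1/(x+(m:ℝ))^k‖ ≤ 2^k/((m:ℝ)+1)^2 := by
  have hxm := pg_pos hx m
  have hm1 : (0:ℝ) < (m:ℝ)+1 := by positivity
  rw [Real.norm_eq_abs, abs_of_nonneg (by positivity)]
  calc 1/(x+(m:ℝ))^k ≤ 2^k/((m:ℝ)+1)^k := by
        rw [div_le_div_iff₀ (by positivity) (by positivity), one_mul, ← mul_pow]
        apply pow_le_pow_left₀ hm1.le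
        linarith [hx.1]
    _ ≤ 2^k/((m:ℝ)+1)^2 := by
        apply div_le_div_of_nonneg_left (by positivity) (by positivity)
        exact pow_le_pow_right₀ (by linarith) hk
lemma pg_summable_u (c : ℝ) : Summable (fun m : ℕ => c/((m:ℝ)+1)^2) := by
  refine (pg_summable_sq.mul_left c).congr fun m => ?_
  rw [mul_one_div]
lemma pg_summable_pow {x : ℝ} (hx : x ∈ pgSet) {k : ℕ} (hk : 2 ≤ k) :
    Summable (fun m : ℕ => 1/(x+(m:ℝ))^k) :=
  Summable.of_norm_bounded (pg_summable_u ((2:ℝ)^k)) (fun m => pg_pow_bound hx m k hk)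

lemma pg_hasDerivAt_pgS {k : ℕ} (hk : 2 ≤ k) {x : ℝ} (hx : x ∈ pgSet) :
    HasDerivAt (pgS k) (-(k:ℝ) * pgS (k+1) x) x := by
  unfold pgS
  have key : HasDerivAt (fun z : ℝ => ∑' m : ℕ, 1/(z+(m:ℝ))^k)
      (∑' m : ℕ, -(k:ℝ) * (1/(x+(m:ℝ))^(k+1))) x := by
    refine hasDerivAt_tsum_of_isPreconnected
      (u := fun m : ℕ => ((k:ℝ) * 2^(k+1))/((m:ℝ)+1)^2)
      (g := fun (m : ℕ) (y : ℝ) => 1/(y+(m:ℝ))^k)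
      (g' := fun (m : ℕ) (y : ℝ) => -(k:ℝ) * (1/(y+(m:ℝ))^(k+1)))
      (pg_summable_u _) pgSet_open pgSet_preconn
      (fun m y hy => ?_) (fun m y hy => ?_) mem_pgSet
      (pg_summable_pow mem_pgSet hk) hx
    · have hym := pg_pos hy m
      have h := (((hasDerivAt_id y).add_const (m:ℝ)).fun_pow k).fun_inv (pow_ne_zero k hym.ne')
      simp only [id_eq] at h
      have heq : -((k:ℝ) * (y+(m:ℝ))^(k-1) * 1) / ((y+(m:ℝ))^k)^2
          = -(k:ℝ) * (1/(y+(m:ℝ))^(k+1)) := by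
        rw [mul_one, ← pow_mul]
        have hsplit : (y+(m:ℝ))^(k*2) = (y+(m:ℝ))^(k+1) * (y+(m:ℝ))^(k-1) := by
          rw [← pow_add]; congr 1; omega
        rw [hsplit]
        field_simp
      rw [heq] at h
      simpa only [one_div] using h
    · have hb := pg_pow_bound hy m (k+1) (by omega)
      have hrw : ‖-(k:ℝ) * (1/(y+(m:ℝ))^(k+1))‖ = (k:ℝ) * ‖1/(y+(m:ℝ))^(k+1)‖ := by
        rw [norm_mul, norm_neg, Real.norm_natCast]
      rw [hrw, mul_div_assoc]
      exact mul_le_mul_of_nonneg_left hb (Nat.cast_nonneg k)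
  rwa [tsum_mul_left] at key

def hseq (n : ℕ) : ℝ := ∑ m ∈ Finset.range n, 1/((m:ℝ)+1)

lemma hseq_eq (n : ℕ) : hseq n = ((harmonic n : ℚ) : ℝ) := by
  unfold hseq harmonic
  push_cast
  exact Finset.sum_congr rfl fun i _ => by ring

lemma pg_c_bound {x : ℝ} (hx : x ∈ pgSet) (m : ℕ) :
    ‖1/((m:ℝ)+1) - 1/(x+(m:ℝ)+1)‖ ≤ 1/((m:ℝ)+1)^2 := by
  have hm1 : (0:ℝ) < (m:ℝ)+1 := by positivity
  have hx0 : (0:ℝ) < x := lt_trans (by norm_num) hx.1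
  have hp2 : (0:ℝ) < x+(m:ℝ)+1 := by linarith
  have key : 1/((m:ℝ)+1) - 1/(x+(m:ℝ)+1) = x/(((m:ℝ)+1)*(x+(m:ℝ)+1)) := by
    field_simp
    ring
  rw [Real.norm_eq_abs, key, abs_of_nonneg (by positivity),
    div_le_div_iff₀ (by positivity) (by positivity)]
  nlinarith [mul_nonneg (mul_nonneg hm1.le (Nat.cast_nonneg (α:=ℝ) m))
    (sub_nonneg.mpr hx.2.le), Nat.cast_nonneg (α:=ℝ) m]

lemma pg_c_summable {x : ℝ} (hx : x ∈ pgSet) :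
    Summable (fun m : ℕ => 1/((m:ℝ)+1) - 1/(x+(m:ℝ)+1)) :=
  Summable.of_norm_bounded pg_summable_sq (pg_c_bound hx)

lemma pg_hasDerivAt_logGamma {x : ℝ} (hx : x ∈ pgSet) :
    HasDerivAt (fun y => Real.log (Real.Gamma y)) (Psi x) x := by
  set f' : ℕ → ℝ → ℝ := fun n x =>
    (Real.log n - hseq n - 1/x) + ∑ m ∈ Finset.range n, (1/((m:ℝ)+1) - 1/(x+(m:ℝ)+1)) with hf'
  have hγ : Tendsto (fun n : ℕ => Real.log n - hseq n) atTop (𝓝 (-eulerMascheroniConstant)) := by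
    have h := Real.tendsto_harmonic_sub_log.neg
    simp only [neg_sub] at h
    refine h.congr fun n => ?_
    rw [hseq_eq]
  have hA : TendstoUniformlyOn (fun (n:ℕ) (x:ℝ) => Real.log n - hseq n - 1/x)
      (fun x => -eulerMascheroniConstant - 1/x) atTop pgSet := by
    rw [Metric.tendstoUniformlyOn_iff]
    intro ε hε
    filter_upwards [Metric.tendsto_nhds.mp hγ ε hε] with n hn x _
    have : dist (-eulerMascheroniConstant - 1/x) (Real.log n - hseq n - 1/x)
        = dist (Real.log n - hseq n) (-eulerMascheroniConstant) := by
      rw [Real.dist_eq, Real.dist_eq, ← abs_neg]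
      ring_nf
    rw [this]
    exact hn
  have hC : TendstoUniformlyOn
      (fun (n:ℕ) (x:ℝ) => ∑ m ∈ Finset.range n, (1/((m:ℝ)+1) - 1/(x+(m:ℝ)+1)))
      (fun x => ∑' m : ℕ, (1/((m:ℝ)+1) - 1/(x+(m:ℝ)+1))) atTop pgSet :=
    tendstoUniformlyOn_tsum_nat pg_summable_sq (fun m x hxs => pg_c_bound hxs m)
  have hunif : TendstoUniformlyOn f' Psi atTop pgSet := by
    have := hA.add hC
    convert this using 2 with x
    all_goals rfl
  have hd : ∀ n : ℕ, ∀ y ∈ pgSet, HasDerivAt (fun x => Real.BohrMollerup.logGammaSeq x n)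
      (f' n y) y := by
    intro n y hy
    have hy0 : (0:ℝ) < y := lt_trans (by norm_num) hy.1
    have hsum : HasDerivAt (fun x : ℝ => ∑ m ∈ Finset.range (n+1), Real.log (x + m))
        (∑ m ∈ Finset.range (n+1), 1/(y+(m:ℝ))) y := by
      refine HasDerivAt.fun_sum fun m _ => ?_
      have hp : (0:ℝ) < y + m := by positivity
      have h := ((hasDerivAt_id y).add_const (m:ℝ)).log hp.ne'
      simpa only [id_eq, one_div] using h
    have h1 : HasDerivAt (fun x : ℝ => x * Real.log n + Real.log (Nat.factorial n))
        (Real.log n) y := (hasDerivAt_mul_const _).add_const _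
    have h := h1.sub hsum
    have hval : Real.log n - ∑ m ∈ Finset.range (n+1), 1/(y+(m:ℝ)) = f' n y := by
      rw [hf']
      dsimp only
      rw [Finset.sum_range_succ' (fun m : ℕ => 1/(y+(m:ℝ))) n, Finset.sum_sub_distrib]
      unfold hseq
      push_cast
      ring_nf
    rw [hval] at h
    exact h.congr_of_eventuallyEq (by
      filter_upwards with z
      simp [Real.BohrMollerup.logGammaSeq])
  exact hasDerivAt_of_tendstoUniformlyOn pgSet_open hunif
    (Eventually.of_forall hd)
    (fun y hy => Real.BohrMollerup.tendsto_log_gamma (lt_trans (by norm_num) hy.1)) hx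

lemma pg_hasDerivAt_Psi {x : ℝ} (hx : x ∈ pgSet) : HasDerivAt Psi (pgS 2 x) x := by
  have hT : HasDerivAt (fun z : ℝ => ∑' m : ℕ, (1/((m:ℝ)+1) - 1/(z+(m:ℝ)+1)))
      (∑' m : ℕ, 1/(x+(m:ℝ)+1)^2) x := by
    refine hasDerivAt_tsum_of_isPreconnected
      (u := fun m : ℕ => 1/((m:ℝ)+1)^2)
      (g := fun (m : ℕ) (y : ℝ) => 1/((m:ℝ)+1) - 1/(y+(m:ℝ)+1))
      (g' := fun (m : ℕ) (y : ℝ) => 1/(y+(m:ℝ)+1)^2)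
      pg_summable_sq pgSet_open pgSet_preconn
      (fun m y hy => ?_) (fun m y hy => ?_) mem_pgSet
      (pg_c_summable mem_pgSet) hx
    · have hy0 : (0:ℝ) < y := lt_trans (by norm_num) hy.1
      have hp : (0:ℝ) < y + (m:ℝ) + 1 := by positivity
      have h := (((hasDerivAt_id y).add_const (m:ℝ)).add_const 1).inv hp.ne'
      simp only [id_eq] at h
      have h2 := h.const_sub (1/((m:ℝ)+1))
      have heq : -(-1 / (y+(m:ℝ)+1)^2) = 1/(y+(m:ℝ)+1)^2 := by ring
      rw [heq] at h2
      exact h2.congr_of_eventuallyEq (by filter_upwards with z; simp [one_div])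
    · have hy0 : (0:ℝ) < y := lt_trans (by norm_num) hy.1
      have hp : (0:ℝ) < y + (m:ℝ) + 1 := by positivity
      have hm1 : (0:ℝ) < (m:ℝ)+1 := by positivity
      rw [Real.norm_eq_abs, abs_of_nonneg (by positivity)]
      apply one_div_le_one_div_of_le (by positivity)
      have h1 : (m:ℝ)+1 ≤ y+(m:ℝ)+1 := by linarith
      nlinarith
  have hx0 : (0:ℝ) < x := lt_trans (by norm_num) hx.1
  have h0 : HasDerivAt (fun z : ℝ => -eulerMascheroniConstant - 1/z) (1/x^2) x := by
    have h := (hasDerivAt_inv hx0.ne').const_sub (-eulerMascheroniConstant)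
    have heq : -(-(x^2)⁻¹) = 1/x^2 := by field_simp
    rw [heq] at h
    exact h.congr_of_eventuallyEq (by filter_upwards with z; rw [one_div])
  have hfinal := h0.add hT
  have hval : pgS 2 x = 1/x^2 + ∑' m : ℕ, 1/(x+(m:ℝ)+1)^2 := by
    unfold pgS
    rw [Summable.tsum_eq_zero_add (pg_summable_pow hx (le_refl 2))]
    congr 1
    · norm_num
    · exact tsum_congr fun m => by push_cast; ring_nf
  rw [hval]
  exact hfinal

/-- The main polygamma formula: iterated derivatives of `log ∘ Γ` on `pgSet`. -/
lemma pg_iteratedDeriv : ∀ k : ℕ, 2 ≤ k → ∀ x ∈ pgSet,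
    iteratedDeriv k (fun y => Real.log (Real.Gamma y)) x
      = (-1:ℝ)^k * (Nat.factorial (k-1)) * pgS k x := by
  intro k hk
  induction k, hk using Nat.le_induction with
  | base =>
    intro x hx
    rw [show (2:ℕ) = 1 + 1 from rfl, iteratedDeriv_succ, iteratedDeriv_one]
    have h1 : deriv (fun y => Real.log (Real.Gamma y)) =ᶠ[𝓝 x] Psi :=
      eventuallyEq_of_mem (pgSet_open.mem_nhds hx) (fun y hy => (pg_hasDerivAt_logGamma hy).deriv)
    rw [h1.deriv_eq, (pg_hasDerivAt_Psi hx).deriv]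
    norm_num
  | succ k hk ih =>
    intro x hx
    rw [iteratedDeriv_succ]
    have h1 : iteratedDeriv k (fun y => Real.log (Real.Gamma y)) =ᶠ[𝓝 x]
        (fun y => (-1:ℝ)^k * (Nat.factorial (k-1)) * pgS k y) :=
      eventuallyEq_of_mem (pgSet_open.mem_nhds hx) (fun y hy => ih y hy)
    rw [h1.deriv_eq]
    have h2 := ((pg_hasDerivAt_pgS hk hx).const_mul ((-1:ℝ)^k * (Nat.factorial (k-1)))).deriv
    rw [h2]
    have hfac : ((Nat.factorial k : ℝ)) = (k:ℝ) * (Nat.factorial (k-1)) := by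
      rw [← Nat.mul_factorial_pred (by omega)]
      push_cast
      ring
    rw [Nat.add_sub_cancel, hfac, pow_succ]
    ring


lemma zf_summable {s : ℕ} (hs : 2 ≤ s) : Summable (fun n : ℕ => 1/((n:ℝ)+1)^s) := by
  refine Summable.of_nonneg_of_le (fun n => by positivity) (fun n => ?_) pg_summable_sq
  have h1 : (0:ℝ) < (n:ℝ)+1 := by positivity
  exact one_div_le_one_div_of_le (by positivity) (pow_le_pow_right₀ (by linarith) hs)

end

end PolygammaAux

set_option maxHeartbeats 1000000 in
open PolygammaAux in
theorem zeta_eq_beta_add_polygamma (s : ℕ) (hs : 2 ≤ s) :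
    zetaInt s = 2 ^ s / (2 ^ s - 1) * dirichletBeta s +
      (-1 : ℝ) ^ s * (2 / (2 ^ s * (2 ^ s - 1))) * polygamma (s - 1) (3/4) / Real.Gamma s := by
  classical
  have hz : Summable (fun n : ℕ => 1/((n:ℝ)+1)^s) := zf_summable hs
  have h2inj : Function.Injective (fun k : ℕ => 2*k) := mul_right_injective₀ two_ne_zero
  have h2inj' : Function.Injective (fun k : ℕ => 2*k+1) := fun a b h => by
    simp only at h; omega
  set A1 : ℝ := ∑' j : ℕ, 1/(4*(j:ℝ)+1)^s with hA1
  set A3 : ℝ := ∑' j : ℕ, 1/(4*(j:ℝ)+3)^s with hA3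
  -- first even/odd split
  have he : Summable (fun k : ℕ => 1/(((2*k:ℕ):ℝ)+1)^s) := hz.comp_injective h2inj
  have ho : Summable (fun k : ℕ => 1/(((2*k+1:ℕ):ℝ)+1)^s) := hz.comp_injective h2inj'
  have split1 : (∑' k : ℕ, 1/(((2*k:ℕ):ℝ)+1)^s) + (∑' k : ℕ, 1/(((2*k+1:ℕ):ℝ)+1)^s)
      = zetaInt s := tsum_even_add_odd (f := fun n : ℕ => 1/((n:ℝ)+1)^s) he ho
  have hgodd : Summable (fun k : ℕ => 1/(2*(k:ℝ)+1)^s) :=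
    he.congr fun k => by push_cast; ring_nf
  have E_even : (∑' k : ℕ, 1/(((2*k:ℕ):ℝ)+1)^s) = ∑' k : ℕ, 1/(2*(k:ℝ)+1)^s :=
    tsum_congr fun k => by push_cast; ring_nf
  have E_odd : (∑' k : ℕ, 1/(((2*k+1:ℕ):ℝ)+1)^s) = (1/2^s) * zetaInt s := by
    have hterm : ∀ k : ℕ, 1/(((2*k+1:ℕ):ℝ)+1)^s = (1/2^s) * (1/((k:ℝ)+1)^s) := by
      intro k
      push_cast
      rw [show (2*(k:ℝ)+1)+1 = 2*((k:ℝ)+1) by ring, mul_pow, div_mul_div_comm, one_mul]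
    rw [tsum_congr hterm, tsum_mul_left]
    rfl
  have e1 : (∑' k : ℕ, 1/(2*(k:ℝ)+1)^s) + (1/2^s) * zetaInt s = zetaInt s := by
    rw [← E_even, ← E_odd]; exact split1
  -- second even/odd split, of the odd part
  have he2 : Summable (fun j : ℕ => 1/((2*((2*j:ℕ):ℝ))+1)^s) :=
    hgodd.comp_injective h2inj
  have ho2 : Summable (fun j : ℕ => 1/((2*((2*j+1:ℕ):ℝ))+1)^s) :=
    hgodd.comp_injective h2inj'
  have split2 : (∑' j : ℕ, 1/((2*((2*j:ℕ):ℝ))+1)^s) + (∑' j : ℕ, 1/((2*((2*j+1:ℕ):ℝ))+1)^s)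
      = ∑' k : ℕ, 1/(2*(k:ℝ)+1)^s := tsum_even_add_odd (f := fun k : ℕ => 1/(2*(k:ℝ)+1)^s) he2 ho2
  have E1 : (∑' j : ℕ, 1/((2*((2*j:ℕ):ℝ))+1)^s) = A1 :=
    tsum_congr fun j => by push_cast; ring_nf
  have E3 : (∑' j : ℕ, 1/((2*((2*j+1:ℕ):ℝ))+1)^s) = A3 :=
    tsum_congr fun j => by push_cast; ring_nf
  have e2 : A1 + A3 = ∑' k : ℕ, 1/(2*(k:ℝ)+1)^s := by
    rw [← E1, ← E3]; exact split2
  -- beta split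
  have hb_even : ∀ j : ℕ, (-1:ℝ)^(2*j) / (2*((2*j:ℕ):ℝ)+1)^s = 1/((2*((2*j:ℕ):ℝ))+1)^s := by
    intro j
    rw [pow_mul]
    norm_num
  have hb_odd : ∀ j : ℕ, (-1:ℝ)^(2*j+1) / (2*((2*j+1:ℕ):ℝ)+1)^s
      = -(1/((2*((2*j+1:ℕ):ℝ))+1)^s) := by
    intro j
    rw [pow_succ, pow_mul]
    norm_num
    rw [neg_div, one_div]
  have hbe : Summable (fun j : ℕ => (-1:ℝ)^(2*j) / (2*((2*j:ℕ):ℝ)+1)^s) :=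
    he2.congr fun j => (hb_even j).symm
  have hbo : Summable (fun j : ℕ => (-1:ℝ)^(2*j+1) / (2*((2*j+1:ℕ):ℝ)+1)^s) :=
    (ho2.neg).congr fun j => (hb_odd j).symm
  have splitβ : (∑' j : ℕ, (-1:ℝ)^(2*j) / (2*((2*j:ℕ):ℝ)+1)^s)
      + (∑' j : ℕ, (-1:ℝ)^(2*j+1) / (2*((2*j+1:ℕ):ℝ)+1)^s) = dirichletBeta s :=
    tsum_even_add_odd (f := fun k : ℕ => (-1:ℝ)^k / (2*(k:ℝ)+1)^s) hbe hbo
  have e3 : dirichletBeta s = A1 - A3 := by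
    rw [← splitβ, tsum_congr hb_even, tsum_congr hb_odd, tsum_neg, E1, E3]
    ring
  -- polygamma value
  have hpgS : pgS s (3/4) = 4^s * A3 := by
    unfold pgS
    have hterm : ∀ m : ℕ, 1/((3/4:ℝ)+(m:ℝ))^s = 4^s * (1/(4*(m:ℝ)+3)^s) := by
      intro m
      rw [show (3/4:ℝ)+(m:ℝ) = (4*(m:ℝ)+3)/4 by ring, div_pow, one_div_div, mul_one_div]
    rw [tsum_congr hterm, tsum_mul_left]
  have hpg : polygamma (s-1) (3/4) = (-1:ℝ)^s * (Nat.factorial (s-1)) * (4^s * A3) := by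
    unfold polygamma
    rw [show s - 1 + 1 = s by omega, pg_iteratedDeriv s hs _ mem_pgSet, hpgS]
  have hΓ : Real.Gamma (s:ℝ) = (Nat.factorial (s-1) : ℝ) := by
    have h2 : s - 1 + 1 = s := by omega
    have h1 : (s:ℝ) = ((s-1:ℕ):ℝ) + 1 := by rw [← h2]; push_cast; ring
    rw [h1, Real.Gamma_nat_eq_factorial]
  -- final algebra
  have hb1 : (1:ℝ) < 2^s := one_lt_pow₀ one_lt_two (by omega)
  have hbne : (2:ℝ)^s ≠ 0 := by positivity
  have hbm1 : (2:ℝ)^s - 1 ≠ 0 := sub_ne_zero_of_ne hb1.ne'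
  have hfacne : (Nat.factorial (s-1) : ℝ) ≠ 0 := Nat.cast_ne_zero.mpr (Nat.factorial_ne_zero _)
  have hsign : (-1:ℝ)^s * (-1:ℝ)^s = 1 := by
    rw [← mul_pow]; norm_num
  have h4 : (4:ℝ)^s = 2^s * 2^s := by rw [← mul_pow]; norm_num
  have hZ : zetaInt s * (2^s - 1) = (A1 + A3) * 2^s := by
    have e1' : (A1 + A3) + (1/2^s) * zetaInt s = zetaInt s := by rw [e2]; exact e1
    field_simp at e1'
    linear_combination -e1'
  rw [hpg, hΓ, e3, h4]
  have key : zetaInt s = 2^s/(2^s-1) * (A1 - A3) + 2^s/((2:ℝ)^s-1) * (2*A3) := by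
    have hZ' : zetaInt s = 2^s/(2^s-1) * (A1 + A3) := by
      rw [div_mul_eq_mul_div, eq_div_iff hbm1]
      linear_combination hZ
    rw [hZ']
    ring
  rw [key]
  congr 1
  have hregroup : (-1:ℝ)^s * (2/(2^s*(2^s-1))) *
        ((-1:ℝ)^s * (Nat.factorial (s-1) : ℝ) * (2^s*2^s*A3)) / (Nat.factorial (s-1) : ℝ)
      = ((-1:ℝ)^s * (-1:ℝ)^s) * ((2/(2^s*(2^s-1))) * (2^s*2^s*A3))
        * ((Nat.factorial (s-1) : ℝ) / (Nat.factorial (s-1) : ℝ)) := by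
    ring
  rw [hregroup, hsign, div_self hfacne, one_mul, mul_one]
  field_simp
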